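/- For every nonnegative integer n and every real t with 0 < t < 1/2, one has (-1)^{n+1} B_{2n+1}(t) > 0, where B_m(t) is the Bernoulli polynomial. -/

import Mathlib

open Set Real Filter

noncomputable def B (n : ℕ) (t : ℝ) : ℝ := Polynomial.aeval t (Polynomial.bernoulli n)

noncomputable def Bnum (n : ℕ) : ℝ := ((bernoulli n : ℚ) : ℝ)

lemma B_differentiable (n : ℕ) : Differentiable ℝ (B n) :=
  Polynomial.differentiable_aeval _

lemma B_deriv (n : ℕ) (t : ℝ) : deriv (B (n + 1)) t = (n + 1 : ℝ) * B n t := by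
  have : deriv (fun x : ℝ => Polynomial.aeval x (Polynomial.bernoulli (n + 1))) t
      = Polynomial.aeval t (Polynomial.derivative (Polynomial.bernoulli (n + 1))) :=
    Polynomial.deriv_aeval _
  rw [show B (n+1) = fun x : ℝ => Polynomial.aeval x (Polynomial.bernoulli (n + 1)) from rfl,
    this, Polynomial.derivative_bernoulli_add_one]
  simp [B, map_mul]

lemma B_zero_val (n : ℕ) : B n 0 = ((bernoulli n : ℚ) : ℝ) := by
  have h : ((0 : ℚ) : ℝ) = (0 : ℝ) := by norm_num
  rw [B, ← h, Polynomial.aeval_def, show ((0:ℚ):ℝ) = algebraMap ℚ ℝ 0 by norm_num,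
    Polynomial.eval₂_at_apply, Polynomial.bernoulli_eval_zero]
  rfl

lemma B_one_val (n : ℕ) : B n 1 = ((bernoulli' n : ℚ) : ℝ) := by
  rw [B, Polynomial.aeval_def, show (1:ℝ) = algebraMap ℚ ℝ 1 by norm_num,
    Polynomial.eval₂_at_apply, Polynomial.bernoulli_eval_one]
  exact eq_ratCast (algebraMap ℚ ℝ) _

lemma B_symm (n : ℕ) (x : ℝ) : B n (1 - x) = (-1 : ℝ)^n * B n x := by
  induction n generalizing x with
  | zero => simp [B, Polynomial.bernoulli_zero]
  | succ n ih =>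
    set f : ℝ → ℝ := fun x => B (n+1) (1 - x) - (-1:ℝ)^(n+1) * B (n+1) x with hf
    have hdf : ∀ y : ℝ, deriv f y = 0 := by
      intro y
      have h1 : HasDerivAt (fun x : ℝ => B (n+1) (1 - x)) (-((n+1:ℝ) * B n (1 - y))) y := by
        have := ((B_differentiable (n+1)) (1 - y)).hasDerivAt
        rw [B_deriv n (1 - y)] at this
        refine (this.comp y (((hasDerivAt_id y).const_sub 1))).congr_deriv ?_
        ring
      have h2 : HasDerivAt (fun x : ℝ => (-1:ℝ)^(n+1) * B (n+1) x)
          ((-1:ℝ)^(n+1) * ((n+1:ℝ) * B n y)) y := by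
        have := ((B_differentiable (n+1)) y).hasDerivAt
        rw [B_deriv n y] at this
        exact this.const_mul _
      have h3 := (h1.sub h2).deriv
      rw [show f = (fun x : ℝ => B (n + 1) (1 - x)) - fun x : ℝ => (-1:ℝ) ^ (n + 1) * B (n + 1) x from rfl,
        h3, ih y, pow_succ]
      ring
    have hconst : ∀ y : ℝ, f y = f 0 := by
      intro y
      have hdiff : Differentiable ℝ f := by
        apply Differentiable.sub
        · exact (B_differentiable (n+1)).comp (by fun_prop)
        · exact (B_differentiable (n+1)).const_mul _
      exact is_const_of_deriv_eq_zero hdiff hdf y 0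
    have hf0 : f 0 = 0 := by
      simp only [hf, sub_zero, mul_zero]
      rw [B_one_val, B_zero_val]
      rcases Nat.even_or_odd (n+1) with he | ho
      · have hne : n + 1 ≠ 1 := by
          intro h1
          rw [h1] at he
          exact Nat.not_even_one he
        rw [bernoulli_eq_bernoulli'_of_ne_one hne, Even.neg_one_pow he, one_mul, sub_self]
      · rcases eq_or_ne (n+1) 1 with h1 | h1
        · rw [h1]
          norm_num [bernoulli'_one, bernoulli_one]
        · rw [bernoulli'_eq_zero_of_odd ho (by omega), bernoulli_eq_bernoulli'_of_ne_one h1,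
            bernoulli'_eq_zero_of_odd ho (by omega)]
          simp
    have := hconst x
    rw [hf0] at this
    simpa [hf, sub_eq_zero] using this

lemma B_half (n : ℕ) : B (2 * n + 1) (1/2) = 0 := by
  have := B_symm (2 * n + 1) (1/2)
  rw [show (1 : ℝ) - 1/2 = 1/2 by norm_num, pow_succ, pow_mul] at this
  simp at this
  linarith

lemma B_odd_zero (n : ℕ) (hn : 1 ≤ n) : B (2 * n + 1) 0 = 0 := by
  rw [B_zero_val, bernoulli_eq_bernoulli'_of_ne_one (by omega),
    bernoulli'_eq_zero_of_odd ⟨n, by omega⟩ (by omega)]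
  simp

theorem stmt1 (n : ℕ) (t : ℝ) (ht : 0 < t) (ht2 : t < 1/2) :
    0 < (-1:ℝ)^(n+1) * B (2*n+1) t := by
  induction n generalizing t with
  | zero =>
    have hb1 : B 1 t = t - 1/2 := by
      simp [B, Polynomial.bernoulli, Finset.sum_range_succ, Polynomial.aeval_monomial]
      norm_num
      ring
    rw [hb1]
    simp only [pow_one, zero_add]
    nlinarith
  | succ n ih =>
    -- h is strictly monotone on [0, 1/2]
    set h : ℝ → ℝ := fun x => (-1:ℝ)^(n+1) * B (2*n+2) x with hh
    have hmono : StrictMonoOn h (Icc (0:ℝ) (1/2)) := by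
      apply strictMonoOn_of_deriv_pos (convex_Icc _ _)
      · exact (((B_differentiable _).const_mul _).continuous).continuousOn
      · intro x hx
        rw [interior_Icc, mem_Ioo] at hx
        have hd : deriv h x = (-1:ℝ)^(n+1) * ((2*n+1+1 : ℝ) * B (2*n+1) x) := by
          rw [hh]
          rw [deriv_const_mul _ ((B_differentiable _) x)]
          rw [show 2*n+2 = (2*n+1)+1 from rfl, B_deriv]
          push_cast; ring_nf
        rw [hd]
        have := ih x hx.1 hx.2
        nlinarith [this]
    -- g is strictly concave on [0, 1/2]
    set g : ℝ → ℝ := fun x => (-1:ℝ)^(n+2) * B (2*n+3) x with hg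
    have hderivg : ∀ x : ℝ, deriv g x = -(2*n+3 : ℝ) * h x := by
      intro x
      rw [hg, deriv_const_mul _ ((B_differentiable _) x),
        show 2*n+3 = (2*n+2)+1 from rfl, B_deriv, hh]
      push_cast
      ring_nf
    have hconc : StrictConcaveOn ℝ (Icc (0:ℝ) (1/2)) g := by
      apply StrictAntiOn.strictConcaveOn_of_deriv (convex_Icc _ _)
      · exact (((B_differentiable _).const_mul _).continuous).continuousOn
      · intro x hx y hy hxy
        rw [interior_Icc] at hx hy
        rw [hderivg, hderivg]
        have := hmono (Ioo_subset_Icc_self hx) (Ioo_subset_Icc_self hy) hxy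
        nlinarith
    have hg0 : g 0 = 0 := by
      rw [hg]
      simp only
      rw [show 2*n+3 = 2*(n+1)+1 by ring, B_odd_zero (n+1) (by omega), mul_zero]
    have hghalf : g (1/2) = 0 := by
      rw [hg]
      simp only
      rw [show 2*n+3 = 2*(n+1)+1 by ring, B_half, mul_zero]
    -- conclude by strict concavity
    have key := hconc.2 (show (0:ℝ) ∈ Icc (0:ℝ) (1/2) by constructor <;> norm_num)
      (show (1/2:ℝ) ∈ Icc (0:ℝ) (1/2) by constructor <;> norm_num)
      (by norm_num) (show (0:ℝ) < 1 - 2*t by linarith) (show (0:ℝ) < 2*t by linarith)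
      (by ring)
    rw [hg0, hghalf] at key
    simp only [smul_eq_mul, mul_zero, add_zero, smul_zero, zero_add] at key
    rw [show (2*t*(1/2):ℝ) = t by ring] at key
    rw [show 2*(n+1)+1 = 2*n+3 by ring, show n+1+1 = n+2 from rfl]
    exact key
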